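/- Let D be a minimum semitotal dominating set of a graph G such that D is independent and every vertex of D has exactly one witness. Let A ⊆ V(G), B = N(A), C = V(G) \ (A ∪ B), and suppose G[C] is a disjoint union of cliques. If no maximal clique K of G[C] contains two or more vertices of D, and D' = D \ (N[𝒦] ∪ w_D(D ∩ N[𝒦])) where 𝒦 is the union of closed neighbourhoods of the cliques of C, then |D'| ≤ 2|A|. -/
import Mathlib


open SimpleGraph

/-- `D` is a total dominating set of `G`: every vertex has a neighbour in `D`. -/
def IsTotalDomSet {V : Type*} (G : SimpleGraph V) (D : Set V) : Prop :=
  ∀ v : V, ∃ u ∈ D, G.Adj u v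

/-- `x` and `y` are (distinct or not) at distance at most two:
adjacent or joined through a common neighbour. -/
def WithinTwo {V : Type*} (G : SimpleGraph V) (x y : V) : Prop :=
  G.Adj x y ∨ ∃ z, G.Adj x z ∧ G.Adj z y

/-- `x` and `y` are at distance exactly two. -/
def DistTwo {V : Type*} (G : SimpleGraph V) (x y : V) : Prop :=
  x ≠ y ∧ ¬ G.Adj x y ∧ ∃ z, G.Adj x z ∧ G.Adj z y

/-- `D` is a semitotal dominating set of `G`: a dominating set in which every
vertex of `D` has another vertex of `D` within distance two (a witness). -/
def IsSemitotalDomSet {V : Type*} (G : SimpleGraph V) (D : Set V) : Prop :=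
  (∀ v : V, v ∉ D → ∃ u ∈ D, G.Adj u v) ∧
  (∀ x ∈ D, ∃ y ∈ D, y ≠ x ∧ WithinTwo G x y)

/-- The total domination number `γ_t`. -/
noncomputable def totalDomNum {V : Type*} (G : SimpleGraph V) [Fintype V] : ℕ :=
  sInf {n | ∃ D : Set V, IsTotalDomSet G D ∧ D.ncard = n}

/-- The semitotal domination number `γ_{t2}`. -/
noncomputable def semitotalDomNum {V : Type*} (G : SimpleGraph V) [Fintype V] : ℕ :=
  sInf {n | ∃ D : Set V, IsSemitotalDomSet G D ∧ D.ncard = n}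

/-- The graph obtained from `G` by contracting the edge `xy`:
delete `y` and merge it into `x`. -/
def contractEdge {V : Type*} (G : SimpleGraph V) (x y : V) :
    SimpleGraph {v : V // v ≠ y} :=
  SimpleGraph.fromRel (fun a b =>
    G.Adj a.1 b.1 ∨ (a.1 = x ∧ G.Adj y b.1) ∨ (b.1 = x ∧ G.Adj y a.1))

/-- A bundled finite simple graph. -/
structure FGraph : Type 1 where
  V : Type
  fin : Fintype V
  G : SimpleGraph V

attribute [instance] FGraph.fin

noncomputable def FGraph.tdn (A : FGraph) : ℕ := totalDomNum A.G

noncomputable def FGraph.stdn (A : FGraph) : ℕ := semitotalDomNum A.G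

/-- `B` is obtained from `A` by contracting a single edge. -/
def FGraph.Contract (A B : FGraph) : Prop :=
  ∃ x y : A.V, A.G.Adj x y ∧ ∃ e : B.V ≃ {v : A.V // v ≠ y},
    ∀ a b : B.V, B.G.Adj a b ↔ (contractEdge A.G x y).Adj (e a) (e b)

/-- `B` is obtained from `A` by a sequence of `n` edge contractions. -/
inductive ContractStar : ℕ → FGraph → FGraph → Prop
  | refl (A : FGraph) : ContractStar 0 A A
  | step {n : ℕ} {A B C : FGraph} : A.Contract B → ContractStar n B C →
      ContractStar (n + 1) A C

/-- At most `k` edge contractions suffice to decrease the total domination number by one. -/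
def ctTDLe (A : FGraph) (k : ℕ) : Prop :=
  ∃ n ≤ k, ∃ B : FGraph, ContractStar n A B ∧ B.tdn = A.tdn - 1

/-- At most `k` edge contractions suffice to decrease the semitotal domination number by one. -/
def ctSTLe (A : FGraph) (k : ℕ) : Prop :=
  ∃ n ≤ k, ∃ B : FGraph, ContractStar n A B ∧ B.stdn = A.stdn - 1

/-- `ct_{γ_t}`: the minimum number of edge contractions needed to decrease `γ_t` by one. -/
noncomputable def ctTDNum (A : FGraph) : ℕ :=
  sInf {n | ∃ B : FGraph, ContractStar n A B ∧ B.tdn = A.tdn - 1}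

/-- `ct_{γ_{t2}}`: the minimum number of edge contractions needed to decrease `γ_{t2}` by one. -/
noncomputable def ctSTNum (A : FGraph) : ℕ :=
  sInf {n | ∃ B : FGraph, ContractStar n A B ∧ B.stdn = A.stdn - 1}

/-- Disjoint union of two simple graphs. -/
def disjGraphUnion {α β : Type*} (G : SimpleGraph α) (H : SimpleGraph β) :
    SimpleGraph (α ⊕ β) :=
  SimpleGraph.fromRel (fun a b =>
    match a, b with
    | Sum.inl a, Sum.inl b => G.Adj a b
    | Sum.inr a, Sum.inr b => H.Adj a b
    | _, _ => False)

/-- Let `D` be a minimum semitotal dominating set of `G` which is independent and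
in which every vertex has exactly one witness.  Let `C` be the set of vertices
outside `A` with no neighbour in `A`, suppose `G[C]` is a disjoint union of
cliques and no maximal clique of `G[C]` contains two vertices of `D`.  Then the
set `D'` of vertices of `D` that are neither in the closed neighbourhood of `C`
nor witnesses of vertices of `D` in that closed neighbourhood satisfies
`|D'| ≤ 2|A|`. -/
theorem stmt15 {V : Type*} [Fintype V] (G : SimpleGraph V) (D A C : Set V)
    (hC : C = {v | v ∉ A ∧ ∀ a ∈ A, ¬ G.Adj a v})
    (hD : IsSemitotalDomSet G D) (hmin : D.ncard = semitotalDomNum G)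
    (hind : ∀ x ∈ D, ∀ y ∈ D, ¬ G.Adj x y)
    (hwit : ∀ x ∈ D, ∃! y, y ∈ D ∧ y ≠ x ∧ WithinTwo G x y)
    (hcliques : ∀ u ∈ C, ∀ v ∈ C, ∀ w ∈ C,
      G.Adj u v → G.Adj v w → u ≠ w → G.Adj u w)
    (hone : ∀ u ∈ D ∩ C, ∀ v ∈ D ∩ C, u ≠ v → ¬ G.Adj u v) :
    (D \ ((C ∪ {v | ∃ c ∈ C, G.Adj c v}) ∪
      {y ∈ D | ∃ x ∈ D, x ∈ C ∪ {v | ∃ c ∈ C, G.Adj c v} ∧ y ≠ x ∧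
        WithinTwo G x y})).ncard ≤ 2 * A.ncard := by
  classical
  set NC : Set V := C ∪ {v | ∃ c ∈ C, G.Adj c v} with hNC
  set W : Set V := {y ∈ D | ∃ x ∈ D, x ∈ NC ∧ y ≠ x ∧ WithinTwo G x y} with hW
  set X : Set V := NC ∪ W with hX
  have hsymm : ∀ x y : V, WithinTwo G x y → WithinTwo G y x := by
    rintro x y (h | ⟨z, h1, h2⟩)
    · exact Or.inl h.symm
    · exact Or.inr ⟨z, h2.symm, h1.symm⟩
  have hnbr : ∀ v : V, ∃ u, G.Adj v u := by
    intro v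
    by_cases hv : v ∈ D
    · obtain ⟨y, -, -, hw⟩ := hD.2 v hv
      rcases hw with h | ⟨z, hz, -⟩
      exacts [⟨y, h⟩, ⟨z, hz⟩]
    · obtain ⟨u, -, ha⟩ := hD.1 v hv
      exact ⟨u, ha.symm⟩
  choose f hf using hnbr
  set S : Set V := (D \ (D \ X)) ∪ A ∪ (f '' A) with hS
  have hDS : D \ (D \ X) ⊆ S := fun v hv => Or.inl (Or.inl hv)
  have hAS : A ⊆ S := fun v hv => Or.inl (Or.inr hv)
  have hdom : IsSemitotalDomSet G S := by
    constructor
    · intro v hv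
      by_cases hvC : v ∈ C
      · have hvD : v ∉ D := fun h =>
          hv (hDS ⟨h, fun hd => hd.2 (Or.inl (Or.inl hvC))⟩)
        obtain ⟨u, hu, ha⟩ := hD.1 v hvD
        exact ⟨u, hDS ⟨hu, fun hd => hd.2 (Or.inl (Or.inr ⟨v, hvC, ha.symm⟩))⟩, ha⟩
      · have hvA : v ∉ A := fun h => hv (hAS h)
        have hne : ¬ (∀ a ∈ A, ¬ G.Adj a v) := by
          intro h
          exact hvC (hC ▸ (⟨hvA, h⟩ : v ∈ {v | v ∉ A ∧ ∀ a ∈ A, ¬ G.Adj a v}))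
        push_neg at hne
        obtain ⟨a, ha, hadj⟩ := hne
        exact ⟨a, hAS ha, hadj⟩
    · intro x hx
      rcases hx with (hx | hxA) | hxf
      · obtain ⟨hxD, hxX⟩ := hx
        have hxX : x ∈ X := by
          by_contra h; exact hxX ⟨hxD, h⟩
        rcases hxX with hxNC | hxW
        · obtain ⟨y, hy, hne, hw⟩ := hD.2 x hxD
          have hyW : y ∈ W := ⟨hy, x, hxD, hxNC, hne, hw⟩
          exact ⟨y, hDS ⟨hy, fun hd => hd.2 (Or.inr hyW)⟩, hne, hw⟩
        · obtain ⟨-, z, hzD, hzNC, hne, hw⟩ := hxW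
          exact ⟨z, hDS ⟨hzD, fun hd => hd.2 (Or.inl hzNC)⟩, fun h => hne h.symm,
            hsymm z x hw⟩
      · exact ⟨f x, Or.inr ⟨x, hxA, rfl⟩, (hf x).ne', Or.inl (hf x)⟩
      · obtain ⟨a, ha, rfl⟩ := hxf
        exact ⟨a, hAS ha, (hf a).ne, Or.inl (hf a).symm⟩
  have h1 : semitotalDomNum G ≤ S.ncard := Nat.sInf_le ⟨S, hdom, rfl⟩
  have h2 : S.ncard ≤ (D \ (D \ X)).ncard + A.ncard + A.ncard :=
    le_trans (Set.ncard_union_le _ _)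
      (add_le_add (Set.ncard_union_le _ _) (Set.ncard_image_le (Set.toFinite A)))
  have h3 : (D \ (D \ X)).ncard + (D \ X).ncard = D.ncard :=
    Set.ncard_diff_add_ncard_of_subset Set.diff_subset (Set.toFinite D)
  omega
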